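/- arXiv:1711.09324 — 2 statements merged into one kernel-verified Lean document; each statement's English description precedes it below -/
import Mathlib

section
/- Let n be a positive integer and k ≤ n an integer. Define a graph on the set of partitions of n of length at least k, where a partition p containing two parts x and y is joined to the partition p' obtained by replacing x and y with x+y, whenever min{x,y} + k ≤ length(p). Then this graph is connected. -/
def IsPartitionOf (n : ℕ) (p : Multiset ℕ) : Prop :=
  (∀ x ∈ p, 0 < x) ∧ p.sum = n

def MergeEdgeGe (n : ℕ) (k : ℤ) (p p' : Multiset ℕ) : Prop :=
  IsPartitionOf n p ∧ IsPartitionOf n p' ∧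
    k ≤ (Multiset.card p : ℤ) ∧ k ≤ (Multiset.card p' : ℤ) ∧
    ∃ x y q, p = x ::ₘ y ::ₘ q ∧ p' = (x + y) ::ₘ q ∧
      (min x y : ℤ) + k ≤ (Multiset.card p : ℤ)

lemma card_le_sum_of_pos (p : Multiset ℕ) (h : ∀ x ∈ p, 0 < x) :
    Multiset.card p ≤ p.sum := by
  induction p using Multiset.induction with
  | empty => simp
  | cons a s ih =>
    simp only [Multiset.card_cons, Multiset.sum_cons]
    have ha := h a (Multiset.mem_cons_self a s)
    have := ih (fun x hx => h x (Multiset.mem_cons_of_mem hx))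
    omega

lemma aux_to_ones (n : ℕ) (k : ℤ) (m : ℕ) :
    ∀ p : Multiset ℕ, IsPartitionOf n p → k ≤ (Multiset.card p : ℤ) →
      n - Multiset.card p ≤ m →
      Relation.ReflTransGen (fun a b => MergeEdgeGe n k a b ∨ MergeEdgeGe n k b a)
        p (Multiset.replicate n 1) := by
  induction m with
  | zero =>
    intro p hp hpk hm
    have hle := card_le_sum_of_pos p hp.1
    rw [hp.2] at hle
    have hcard : Multiset.card p = n := by omega
    have : p = Multiset.replicate n 1 := by
      rw [Multiset.eq_replicate]
      refine ⟨hcard, fun b hb => ?_⟩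
      by_contra hb1
      have hb0 := hp.1 b hb
      have h2 : 2 ≤ b := by omega
      obtain ⟨q, hq⟩ : ∃ q, p = b ::ₘ q := ⟨p.erase b, (Multiset.cons_erase hb).symm⟩
      have hsq : q.sum + b = n := by
        have := hp.2; rw [hq] at this; simp [Multiset.sum_cons] at this; omega
      have hcq : Multiset.card q + 1 = n := by
        rw [hq] at hcard; simpa [Multiset.card_cons, add_comm] using hcard
      have := card_le_sum_of_pos q (fun x hx => hp.1 x (hq ▸ Multiset.mem_cons_of_mem hx))
      omega
    rw [this]
  | succ m ih =>
    intro p hp hpk hm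
    by_cases hall : ∀ b ∈ p, b = 1
    · have hle := card_le_sum_of_pos p hp.1
      rw [hp.2] at hle
      have hcard : p.sum = Multiset.card p := by
        have hrep : p = Multiset.replicate (Multiset.card p) 1 :=
          Multiset.eq_replicate_card.mpr hall
        rw [hrep]; simp
      have : p = Multiset.replicate n 1 := by
        rw [Multiset.eq_replicate]
        have hsum := hp.2
        exact ⟨by omega, hall⟩
      rw [this]
    · push_neg at hall
      obtain ⟨b, hb, hb1⟩ := hall
      have hb0 := hp.1 b hb
      have h2 : 2 ≤ b := by omega
      obtain ⟨q, hq⟩ : ∃ q, p = b ::ₘ q := ⟨p.erase b, (Multiset.cons_erase hb).symm⟩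
      set p₁ : Multiset ℕ := (b - 1) ::ₘ (1 : ℕ) ::ₘ q with hp₁
      have hqpos : ∀ x ∈ q, 0 < x := fun x hx => hp.1 x (hq ▸ Multiset.mem_cons_of_mem hx)
      have hp₁part : IsPartitionOf n p₁ := by
        constructor
        · intro x hx
          rw [hp₁] at hx
          rcases Multiset.mem_cons.mp hx with h | hx
          · omega
          · rcases Multiset.mem_cons.mp hx with h | hx
            · omega
            · exact hqpos x hx
        · have := hp.2
          rw [hq, Multiset.sum_cons] at this
          rw [hp₁]; simp [Multiset.sum_cons]; omega
      have hcard₁ : Multiset.card p₁ = Multiset.card p + 1 := by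
        rw [hp₁, hq]; simp
      have hedge : MergeEdgeGe n k p₁ p := by
        refine ⟨hp₁part, hp, ?_, hpk, (b-1), 1, q, rfl, ?_, ?_⟩
        · rw [hcard₁]; push_cast; omega
        · rw [hq]; congr 1; omega
        · rw [hcard₁]; omega
      refine Relation.ReflTransGen.head (Or.inr hedge) ?_
      apply ih p₁ hp₁part
      · rw [hcard₁]; push_cast at hpk ⊢; omega
      · have hle := card_le_sum_of_pos p₁ hp₁part.1
        rw [hp₁part.2] at hle
        omega

/-- The graph on partitions of `n` of length at least `k`, with merge edges subject to
`min{x,y} + k ≤ length(p)`, is connected. -/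
theorem partitions_length_ge_connected (n : ℕ) (hn : 0 < n) (k : ℤ) (hk : k ≤ (n : ℤ))
    (p p' : Multiset ℕ) (hp : IsPartitionOf n p) (hp' : IsPartitionOf n p')
    (hpk : k ≤ (Multiset.card p : ℤ)) (hp'k : k ≤ (Multiset.card p' : ℤ)) :
    Relation.ReflTransGen (fun a b => MergeEdgeGe n k a b ∨ MergeEdgeGe n k b a) p p' := by
  have hsymm : Symmetric (fun a b => MergeEdgeGe n k a b ∨ MergeEdgeGe n k b a) :=
    fun a b h => h.symm
  have h1 := aux_to_ones n k n p hp hpk (by omega)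
  have h2 := aux_to_ones n k n p' hp' hp'k (by omega)
  exact h1.trans ((@Relation.ReflTransGen.symmetric _ _ ⟨hsymm⟩).symm _ _ h2)
end

section
/- Let Ω^s(d,g,m) be the set of 'small topological profiles' with |V(𝔓)| = |V(𝔉)| = 1: these correspond to partitions p of d-1 with g + 1 - C(d-2,2) ≤ length(p) ≤ g + 1 (where the P-vertex genus is g(v) = g + 1 - length(p), constrained by 0 ≤ g(v) ≤ C(d-2,2)). Join p to p' (obtained by merging parts x, y into x+y) whenever min{x,y} ≤ C(d-2,2) - g + length(p) - 1. Then for all d ≥ 3 and 0 ≤ g ≤ C(d-1,2), this graph is connected. -/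
/-- Membership in the set of small topological profiles with one vertex on each shore:
partitions `p` of `d - 1` with `g + 1 - C(d-2,2) ≤ length(p) ≤ g + 1`
(the lower bound stated additively in `ℕ`). -/
def InSmallLandscape (d g : ℕ) (p : Multiset ℕ) : Prop :=
  IsPartitionOf (d - 1) p ∧ g + 1 ≤ Multiset.card p + (d - 2).choose 2 ∧
    Multiset.card p ≤ g + 1

/-- An edge: `p'` is obtained from `p` by merging parts `x`, `y` into `x + y`, subject to
`min{x,y} ≤ C(d-2,2) - g + length(p) - 1` (stated additively in `ℕ` as
`min{x,y} + g + 1 ≤ C(d-2,2) + length(p)`); both endpoints lie in the landscape. -/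
def SmallEdge (d g : ℕ) (p p' : Multiset ℕ) : Prop :=
  InSmallLandscape d g p ∧ InSmallLandscape d g p' ∧
    ∃ x y q, p = x ::ₘ y ::ₘ q ∧ p' = (x + y) ::ₘ q ∧
      min x y + g + 1 ≤ (d - 2).choose 2 + Multiset.card p

/-- The canonical partition of `d-1`: one big part and `min g (d-2)` ones. -/
def canonPart (d g : ℕ) : Multiset ℕ :=
  (d - 1 - min g (d - 2)) ::ₘ Multiset.replicate (min g (d - 2)) 1

private lemma two_mul_choose_two (m : ℕ) : 2 * m.choose 2 = m * (m - 1) := by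
  induction m with
  | zero => rfl
  | succ j ih =>
    rw [Nat.choose_succ_succ j 1, Nat.choose_one_right]
    cases j with
    | zero => rfl
    | succ i =>
      simp only [Nat.succ_sub_one] at ih ⊢
      nlinarith [ih]

private lemma aux_ineq {d : ℕ} (hd5 : 5 ≤ d)
    (h2C : 2 * (d - 2).choose 2 = (d - 2) * (d - 3)) :
    3 ≤ (d - 2).choose 2 ∧ d - 1 ≤ 2 * (d - 2).choose 2 + 1 := by
  obtain ⟨b, hb⟩ : ∃ b, d = b + 5 := ⟨d - 5, by omega⟩
  have key : (d - 2) * (d - 3) = (b + 3) * (b + 2) := by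
    rw [show d - 2 = b + 3 by omega, show d - 3 = b + 2 by omega]
  rw [key] at h2C
  constructor
  · have hprod : 6 ≤ (b + 3) * (b + 2) := by nlinarith
    linarith
  · have hprod : b + 4 ≤ (b + 3) * (b + 2) + 1 := by nlinarith
    have hd1 : d - 1 = b + 4 := by omega
    linarith

private lemma card_le_sum' {p : Multiset ℕ} (h : ∀ x ∈ p, 0 < x) :
    Multiset.card p ≤ p.sum := by
  simpa using Multiset.card_nsmul_le_sum h

private lemma land_card_le {d g : ℕ} {p : Multiset ℕ} (hp : InSmallLandscape d g p) :
    Multiset.card p ≤ min g (d - 2) + 1 := by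
  obtain ⟨⟨hpos, hsum⟩, _, hub⟩ := hp
  have h1 : Multiset.card p ≤ d - 1 := hsum ▸ card_le_sum' hpos
  omega

private lemma canon_in_landscape {d g : ℕ} (hd : 3 ≤ d) (hg : g ≤ (d - 1).choose 2) :
    InSmallLandscape d g (canonPart d g) := by
  have hC : (d - 1).choose 2 = (d - 2).choose 2 + (d - 2) := by
    have h1 : d - 1 = (d - 2) + 1 := by omega
    rw [h1, Nat.choose_succ_succ, Nat.choose_one_right]; ring
  set k := min g (d - 2) with hk
  have hk2 : k ≤ d - 2 := min_le_right _ _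
  constructor
  · constructor
    · intro x hx
      rw [canonPart, Multiset.mem_cons] at hx
      rcases hx with h | h
      · omega
      · rw [Multiset.eq_of_mem_replicate h]; omega
    · simp only [canonPart, Multiset.sum_cons, Multiset.sum_replicate, smul_eq_mul, mul_one]
      omega
  · simp only [canonPart, Multiset.card_cons, Multiset.card_replicate]
    omega

/-- Terminal characterization: a landscape partition with maximal length and at most
one part `≥ 2` is the canonical one. -/
private lemma terminal_eq_canon {d g : ℕ} (hd : 3 ≤ d) {p : Multiset ℕ}
    (hp : InSmallLandscape d g p)
    (hcard : min g (d - 2) + 1 ≤ Multiset.card p)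
    (hnu : Multiset.card (p.filter (fun z => 2 ≤ z)) ≤ 1) :
    p = canonPart d g := by
  obtain ⟨⟨hpos, hsum⟩, hlb, hub⟩ := hp
  have hcard' : Multiset.card p = min g (d - 2) + 1 :=
    le_antisymm (land_card_le ⟨⟨hpos, hsum⟩, hlb, hub⟩) hcard
  set k := min g (d - 2) with hk
  interval_cases h : Multiset.card (p.filter (fun z => 2 ≤ z))
  · -- no part ≥ 2 : all ones
    have h0 : p.filter (fun z => 2 ≤ z) = 0 := Multiset.card_eq_zero.mp h
    have hall : ∀ b ∈ p, b = 1 := by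
      intro b hb
      have := (Multiset.filter_eq_nil).mp h0 b hb
      have := hpos b hb
      omega
    have hrep : p = Multiset.replicate (Multiset.card p) 1 :=
      Multiset.eq_replicate_card.mpr hall
    have hsum' : p.sum = Multiset.card p := by
      rw [hrep]; simp
    have hkd : k = d - 2 := by omega
    rw [hrep, hcard', canonPart, ← hk]
    have : d - 1 - k = 1 := by omega
    rw [this, ← Multiset.replicate_succ]
  · -- exactly one part ≥ 2
    obtain ⟨m, hm⟩ := Multiset.card_eq_one.mp h
    have hmmem : m ∈ p ∧ 2 ≤ m := by
      have : m ∈ p.filter (fun z => 2 ≤ z) := by rw [hm]; exact Multiset.mem_singleton_self m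
      simpa using Multiset.mem_filter.mp this
    obtain ⟨q, hq⟩ := Multiset.exists_cons_of_mem hmmem.1
    have hfq : q.filter (fun z => 2 ≤ z) = 0 := by
      have : (m ::ₘ q).filter (fun z => 2 ≤ z) = m ::ₘ q.filter (fun z => 2 ≤ z) :=
        Multiset.filter_cons_of_pos _ hmmem.2
      rw [hq, this] at hm
      have := congrArg Multiset.card hm
      simp at this
      exact Multiset.filter_eq_nil.mpr (fun a ha => by have := this a ha; omega)
    have hallq : ∀ b ∈ q, b = 1 := by
      intro b hb
      have := (Multiset.filter_eq_nil).mp hfq b hb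
      have : 0 < b := hpos b (by rw [hq]; exact Multiset.mem_cons_of_mem hb)
      omega
    have hrepq : q = Multiset.replicate (Multiset.card q) 1 :=
      Multiset.eq_replicate_card.mpr hallq
    have hcq : Multiset.card q = k := by
      have := congrArg Multiset.card hq
      simp at this
      omega
    have hsq : q.sum = k := by rw [hrepq, hcq]; simp
    have hmval : m = d - 1 - k := by
      rw [hq, Multiset.sum_cons, hsq] at hsum
      omega
    rw [hq, hmval, hrepq, hcq, canonPart, ← hk]

private lemma reach_canon (d g : ℕ) (hd : 3 ≤ d) (hg : g ≤ (d - 1).choose 2) :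
    ∀ N p,
      2 * (min g (d - 2) + 1 - Multiset.card p)
        + Multiset.card (p.filter (fun z => 2 ≤ z)) ≤ N →
      InSmallLandscape d g p →
      Relation.ReflTransGen (fun a b => SmallEdge d g a b ∨ SmallEdge d g b a) p
        (canonPart d g) := by
  have hC : (d - 1).choose 2 = (d - 2).choose 2 + (d - 2) := by
    have h1 : d - 1 = (d - 2) + 1 := by omega
    rw [h1, Nat.choose_succ_succ, Nat.choose_one_right]; ring
  have h2C : 2 * (d - 2).choose 2 = (d - 2) * (d - 3) := by
    have := two_mul_choose_two (d - 2)
    have h3 : d - 2 - 1 = d - 3 := by omega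
    rw [h3] at this; exact this
  intro N
  induction N with
  | zero =>
    intro p hN hp
    have h1 : min g (d - 2) + 1 ≤ Multiset.card p := by omega
    have h2 : Multiset.card (p.filter (fun z => 2 ≤ z)) ≤ 1 := by omega
    rw [terminal_eq_canon hd hp h1 h2]
  | succ N ih =>
    intro p hN hp
    obtain ⟨⟨hpos, hsum⟩, hlb, hub⟩ := hp
    set k := min g (d - 2) with hk
    have hcardle : Multiset.card p ≤ k + 1 := land_card_le ⟨⟨hpos, hsum⟩, hlb, hub⟩
    by_cases hterm : k + 1 ≤ Multiset.card p ∧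
        Multiset.card (p.filter (fun z => 2 ≤ z)) ≤ 1
    · rw [terminal_eq_canon hd ⟨⟨hpos, hsum⟩, hlb, hub⟩ hterm.1 hterm.2]
    · push_neg at hterm
      by_cases hA : Multiset.card p < k + 1
      · -- Case A : split off a 1
        -- there is a part ≥ 2
        have hex : ∃ z ∈ p, 2 ≤ z := by
          by_contra hcon
          push_neg at hcon
          have hall : ∀ b ∈ p, b = 1 := fun b hb => by
            have := hcon b hb; have := hpos b hb; omega
          have : p.sum = Multiset.card p := by
            rw [Multiset.eq_replicate_card.mpr hall]; simp
          omega
        obtain ⟨z, hz, hz2⟩ := hex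
        obtain ⟨q, hq⟩ := Multiset.exists_cons_of_mem hz
        set p₂ : Multiset ℕ := 1 ::ₘ (z - 1) ::ₘ q with hp₂
        have hcardq : Multiset.card p = Multiset.card q + 1 := by rw [hq]; simp
        have hsumq : z + q.sum = d - 1 := by rw [hq, Multiset.sum_cons] at hsum; omega
        have hland2 : InSmallLandscape d g p₂ := by
          refine ⟨⟨?_, ?_⟩, ?_, ?_⟩
          · intro x hx
            simp only [hp₂, Multiset.mem_cons] at hx
            rcases hx with h | h | h
            · omega
            · omega
            · exact hpos x (by rw [hq]; exact Multiset.mem_cons_of_mem h)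
          · simp only [hp₂, Multiset.sum_cons]; omega
          · simp only [hp₂, Multiset.card_cons]; omega
          · simp only [hp₂, Multiset.card_cons]; omega
        have hedge : SmallEdge d g p₂ p := by
          refine ⟨hland2, ⟨⟨hpos, hsum⟩, hlb, hub⟩, 1, z - 1, q, rfl, ?_, ?_⟩
          · rw [hq]; congr 1; omega
          · simp only [hp₂, Multiset.card_cons]
            have : min 1 (z - 1) = 1 := by omega
            rw [this]; omega
        refine Relation.ReflTransGen.head (Or.inr hedge) (ih p₂ ?_ hland2)
        -- measure decreases
        have hf1 : Multiset.card (p.filter (fun z => 2 ≤ z))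
            = Multiset.card (q.filter (fun z => 2 ≤ z)) + 1 := by
          rw [hq, Multiset.filter_cons_of_pos _ hz2, Multiset.card_cons]
        have hf2 : Multiset.card (p₂.filter (fun z => 2 ≤ z))
            ≤ Multiset.card (q.filter (fun z => 2 ≤ z)) + 1 := by
          rw [hp₂, Multiset.filter_cons_of_neg _ (by omega)]
          by_cases h3 : 2 ≤ z - 1
          · rw [Multiset.filter_cons_of_pos _ h3, Multiset.card_cons]
          · rw [Multiset.filter_cons_of_neg _ h3]
            exact Nat.le_succ _
        have hc2 : Multiset.card p₂ = Multiset.card p + 1 := by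
          simp only [hp₂, Multiset.card_cons]; omega
        have hbr1 : Multiset.card (Multiset.filter (LE.le 2) q)
            = Multiset.card (Multiset.filter (fun z => 2 ≤ z) q) := rfl
        have hbr2 : Multiset.card (Multiset.filter (LE.le 2) p₂)
            = Multiset.card (Multiset.filter (fun z => 2 ≤ z) p₂) := rfl
        have hbr3 : Multiset.card (Multiset.filter (LE.le 2) p)
            = Multiset.card (Multiset.filter (fun z => 2 ≤ z) p) := rfl
        omega
      · -- Case B : card p = k + 1, at least two parts ≥ 2
        have hcard' : Multiset.card p = k + 1 := by omega
        have hnu : 2 ≤ Multiset.card (p.filter (fun z => 2 ≤ z)) := by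
          have := hterm (by omega); omega
        -- extract two parts ≥ 2
        have hx : ∃ x ∈ p, 2 ≤ x := by
          have : p.filter (fun z => 2 ≤ z) ≠ 0 := by
            intro h; rw [h] at hnu; simp at hnu
          obtain ⟨x, hx⟩ := Multiset.exists_mem_of_ne_zero this
          exact ⟨x, (Multiset.mem_filter.mp hx).1, (Multiset.mem_filter.mp hx).2⟩
        obtain ⟨x, hxp, hx2⟩ := hx
        obtain ⟨q, hq⟩ := Multiset.exists_cons_of_mem hxp
        have hfq : Multiset.card (q.filter (fun z => 2 ≤ z)) + 1
            = Multiset.card (p.filter (fun z => 2 ≤ z)) := by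
          rw [hq, Multiset.filter_cons_of_pos _ hx2, Multiset.card_cons]
        have hy : ∃ y ∈ q, 2 ≤ y := by
          have : q.filter (fun z => 2 ≤ z) ≠ 0 := by
            intro h; rw [h] at hfq; simp at hfq; omega
          obtain ⟨y, hy⟩ := Multiset.exists_mem_of_ne_zero this
          exact ⟨y, (Multiset.mem_filter.mp hy).1, (Multiset.mem_filter.mp hy).2⟩
        obtain ⟨y, hyq, hy2⟩ := hy
        obtain ⟨r, hr⟩ := Multiset.exists_cons_of_mem hyq
        have hpr : p = x ::ₘ y ::ₘ r := by rw [hq, hr]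
        have hsumr : x + y + r.sum = d - 1 := by
          rw [hpr, Multiset.sum_cons, Multiset.sum_cons] at hsum; omega
        have hcardr : Multiset.card p = Multiset.card r + 2 := by rw [hpr]; simp
        have hrle : Multiset.card r ≤ r.sum := by
          apply card_le_sum'
          intro b hb; exact hpos b (by rw [hpr]; exact Multiset.mem_cons_of_mem (Multiset.mem_cons_of_mem hb))
        have hd5 : 5 ≤ d := by omega
        obtain ⟨hC3, hdd⟩ := aux_ineq hd5 h2C
        have hmin : min x y ≤ (d - 2).choose 2 := by omega
        have hkg : k = g := by omega
        -- intermediate merged partition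
        set m : Multiset ℕ := (x + y) ::ₘ r with hm
        have hlandm : InSmallLandscape d g m := by
          refine ⟨⟨?_, ?_⟩, ?_, ?_⟩
          · intro b hb
            simp only [hm, Multiset.mem_cons] at hb
            rcases hb with h | h
            · omega
            · exact hpos b (by rw [hpr]; exact Multiset.mem_cons_of_mem (Multiset.mem_cons_of_mem h))
          · simp only [hm, Multiset.sum_cons]; omega
          · simp only [hm, Multiset.card_cons]; omega
          · simp only [hm, Multiset.card_cons]; omega
        have hedge1 : SmallEdge d g p m :=
          ⟨⟨⟨hpos, hsum⟩, hlb, hub⟩, hlandm, x, y, r, hpr, rfl, by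
            rw [hcard']; omega⟩
        -- split a 1 back off
        set p₂ : Multiset ℕ := 1 ::ₘ (x + y - 1) ::ₘ r with hp₂
        have hland2 : InSmallLandscape d g p₂ := by
          refine ⟨⟨?_, ?_⟩, ?_, ?_⟩
          · intro b hb
            simp only [hp₂, Multiset.mem_cons] at hb
            rcases hb with h | h | h
            · omega
            · omega
            · exact hpos b (by rw [hpr]; exact Multiset.mem_cons_of_mem (Multiset.mem_cons_of_mem h))
          · simp only [hp₂, Multiset.sum_cons]; omega
          · simp only [hp₂, Multiset.card_cons]; omega
          · simp only [hp₂, Multiset.card_cons]; omega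
        have hedge2 : SmallEdge d g p₂ m := by
          refine ⟨hland2, hlandm, 1, x + y - 1, r, rfl, ?_, ?_⟩
          · rw [hm]; congr 1; omega
          · simp only [hp₂, Multiset.card_cons]
            have : min 1 (x + y - 1) = 1 := by omega
            rw [this]; omega
        refine Relation.ReflTransGen.head (Or.inl hedge1)
          (Relation.ReflTransGen.head (Or.inr hedge2) (ih p₂ ?_ hland2))
        -- measure decreases
        have hfp : Multiset.card (p.filter (fun z => 2 ≤ z))
            = Multiset.card (r.filter (fun z => 2 ≤ z)) + 2 := by
          rw [hpr, Multiset.filter_cons_of_pos _ hx2, Multiset.filter_cons_of_pos _ hy2,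
            Multiset.card_cons, Multiset.card_cons]
        have hfp2 : Multiset.card (p₂.filter (fun z => 2 ≤ z))
            = Multiset.card (r.filter (fun z => 2 ≤ z)) + 1 := by
          rw [hp₂, Multiset.filter_cons_of_neg _ (by omega),
            Multiset.filter_cons_of_pos _ (by omega : (fun z => 2 ≤ z) (x + y - 1)),
            Multiset.card_cons]
        have hc2 : Multiset.card p₂ = Multiset.card p := by
          simp only [hp₂, Multiset.card_cons]; omega
        have hbr1 : Multiset.card (Multiset.filter (LE.le 2) r)
            = Multiset.card (Multiset.filter (fun z => 2 ≤ z) r) := rfl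
        have hbr2 : Multiset.card (Multiset.filter (LE.le 2) p₂)
            = Multiset.card (Multiset.filter (fun z => 2 ≤ z) p₂) := rfl
        have hbr3 : Multiset.card (Multiset.filter (LE.le 2) p)
            = Multiset.card (Multiset.filter (fun z => 2 ≤ z) p) := rfl
        omega

/-- For all `d ≥ 3` and `0 ≤ g ≤ C(d-1,2)`, the graph of small topological profiles with
`|V(𝔓)| = |V(𝔉)| = 1` (partitions of `d-1` with the length bounds above and merge edges
subject to the min condition) is connected. -/
theorem small_landscape_one_vertex_connected (d g : ℕ) (hd : 3 ≤ d)
    (hg : g ≤ (d - 1).choose 2)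
    (p p' : Multiset ℕ) (hp : InSmallLandscape d g p) (hp' : InSmallLandscape d g p') :
    Relation.ReflTransGen (fun a b => SmallEdge d g a b ∨ SmallEdge d g b a) p p' := by
  have h1 := reach_canon d g hd hg _ p le_rfl hp
  have h2 := reach_canon d g hd hg _ p' le_rfl hp'
  have hsymm : Symmetric (fun a b => SmallEdge d g a b ∨ SmallEdge d g b a) :=
    fun a b h => Or.symm h
  exact h1.trans (haveI : Std.Symm (fun a b => SmallEdge d g a b ∨ SmallEdge d g b a) := ⟨hsymm⟩
    Relation.ReflTransGen.symmetric.symm _ _ h2)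
end
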